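/- Let c be a real number with 0 < c < 1 and let n be a positive integer. Then for every l ∈ {1,…,n} there exists θ_l ∈ ((l−1)π/n, lπ/n) such that U_n(cos θ_l) − 2c·U_{n−1}(cos θ_l) + c²·U_{n−2}(cos θ_l) = 0. In particular the polynomial P_n(x) = U_n(x) − 2c·U_{n−1}(x) + c²·U_{n−2}(x) has n distinct roots of the form cos θ with θ ∈ (0, π), one in each of the n intervals partitioning (0, π) into pieces of length π/n. -/

import Mathlib

open Matrix BigOperators Polynomial Real


open Filter Topology Set

private lemma exists_pos_right_of_deriv_pos {f : ℝ → ℝ} {x D : ℝ}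
    (hD : HasDerivAt f D x) (hf0 : f x = 0) (hDpos : 0 < D)
    {b : ℝ} (hb : x < b) : ∃ y ∈ Set.Ioo x b, 0 < f y := by
  have hs : Filter.Tendsto (slope f x) (𝓝[>] x) (𝓝 D) :=
    (hasDerivAt_iff_tendsto_slope.mp hD).mono_left
      (nhdsWithin_mono x fun y hy => ne_of_gt hy)
  have h1 : ∀ᶠ y in 𝓝[>] x, 0 < slope f x y := hs.eventually (eventually_gt_nhds hDpos)
  have h2 : ∀ᶠ y in 𝓝[>] x, y ∈ Set.Ioo x b := Ioo_mem_nhdsGT_of_mem ⟨le_refl x, hb⟩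
  obtain ⟨y, hy1, hy2⟩ := (h1.and h2).exists
  refine ⟨y, hy2, ?_⟩
  have hxy : 0 < y - x := sub_pos.mpr hy2.1
  have h3 := mul_pos hy1 hxy
  rw [slope_def_field, hf0, sub_zero, div_mul_cancel₀ _ (ne_of_gt hxy)] at h3
  exact h3

private lemma exists_pos_left_of_deriv_neg {f : ℝ → ℝ} {x D : ℝ}
    (hD : HasDerivAt f D x) (hf0 : f x = 0) (hDneg : D < 0)
    {a : ℝ} (ha : a < x) : ∃ y ∈ Set.Ioo a x, 0 < f y := by
  have hs : Filter.Tendsto (slope f x) (𝓝[<] x) (𝓝 D) :=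
    (hasDerivAt_iff_tendsto_slope.mp hD).mono_left
      (nhdsWithin_mono x fun y hy => ne_of_lt hy)
  have h1 : ∀ᶠ y in 𝓝[<] x, slope f x y < 0 := hs.eventually (eventually_lt_nhds hDneg)
  have h2 : ∀ᶠ y in 𝓝[<] x, y ∈ Set.Ioo a x := Ioo_mem_nhdsLT_of_mem ⟨ha, le_refl x⟩
  obtain ⟨y, hy1, hy2⟩ := (h1.and h2).exists
  refine ⟨y, hy2, ?_⟩
  have hxy : y - x < 0 := sub_neg.mpr hy2.2
  have h3 := mul_pos_of_neg_of_neg hy1 hxy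
  rw [slope_def_field, hf0, sub_zero, div_mul_cancel₀ _ (ne_of_lt hxy)] at h3
  exact h3


set_option maxHeartbeats 1000000 in
/-- for `0 < c < 1`, the polynomial `P_n = U_n − 2c U_{n−1} + c² U_{n−2}` has a
root `cos θ_l` with `θ_l` in the open interval `((l−1)π/n, lπ/n)`, for each `l ∈ {1,…,n}`.
Since these intervals are pairwise disjoint, this produces `n` distinct roots. -/
theorem roots_of_Pn_in_intervals
    (c : ℝ) (hc0 : 0 < c) (hc1 : c < 1) (n : ℕ) (hn : 0 < n) :
    ∀ l : ℕ, 1 ≤ l → l ≤ n →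
      ∃ θ : ℝ, θ ∈ Set.Ioo (((l : ℝ) - 1) * π / n) ((l : ℝ) * π / n) ∧
        (Chebyshev.U ℝ (n : ℤ)).eval (Real.cos θ)
          - 2 * c * (Chebyshev.U ℝ ((n : ℤ) - 1)).eval (Real.cos θ)
          + c ^ 2 * (Chebyshev.U ℝ ((n : ℤ) - 2)).eval (Real.cos θ) = 0 := by
  intro l hl1 hln
  have hNpos : (0:ℝ) < (n:ℝ) := by exact_mod_cast hn
  have hN0 : (n:ℝ) ≠ 0 := ne_of_gt hNpos
  have hN1 : (1:ℝ) ≤ (n:ℝ) := by exact_mod_cast hn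
  set f : ℝ → ℝ := fun θ =>
    Real.sin (((n:ℝ)+1)*θ) - 2*c*Real.sin ((n:ℝ)*θ) + c^2 * Real.sin (((n:ℝ)-1)*θ)
    with hfdef
  have hf0 : f 0 = 0 := by simp [hfdef]
  have hfpi : f π = 0 := by
    have e1 : Real.sin (((n:ℝ)+1)*π) = 0 := by
      have h : ((n:ℝ)+1)*π = ((n+1 : ℕ):ℝ)*π := by push_cast; ring
      rw [h, Real.sin_nat_mul_pi]
    have e2 : Real.sin ((n:ℝ)*π) = 0 := Real.sin_nat_mul_pi n
    have e3 : Real.sin (((n:ℝ)-1)*π) = 0 := by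
      have h : ((n:ℝ)-1)*π = (n:ℝ)*π - π := by ring
      rw [h, Real.sin_nat_mul_pi_sub, Real.sin_pi]; ring
    simp [hfdef, e1, e2, e3]
  have hcont : Continuous f := by fun_prop
  -- values at grid points
  have hgrid : ∀ k : ℕ, f ((k:ℝ)*π/(n:ℝ)) = (-1)^k * (1-c^2) * Real.sin ((k:ℝ)*π/(n:ℝ)) := by
    intro k
    have e1 : ((n:ℝ)+1)*((k:ℝ)*π/(n:ℝ)) = (k:ℝ)*π + (k:ℝ)*π/(n:ℝ) := by field_simp
    have e2 : (n:ℝ)*((k:ℝ)*π/(n:ℝ)) = (k:ℝ)*π := by field_simp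
    have e3 : ((n:ℝ)-1)*((k:ℝ)*π/(n:ℝ)) = (k:ℝ)*π - (k:ℝ)*π/(n:ℝ) := by field_simp
    have c1 : Real.cos ((k:ℝ)*π) = (-1)^k := by
      simpa using Real.cos_nat_mul_pi_sub 0 k
    simp only [hfdef]
    rw [e1, e2, e3, Real.sin_add, Real.sin_nat_mul_pi, Real.sin_nat_mul_pi_sub, c1]
    ring
  -- derivative
  have hderiv : ∀ x : ℝ, HasDerivAt f
      (((n:ℝ)+1)*Real.cos (((n:ℝ)+1)*x) - 2*c*((n:ℝ)*Real.cos ((n:ℝ)*x))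
        + c^2*(((n:ℝ)-1)*Real.cos (((n:ℝ)-1)*x))) x := by
    intro x
    have key : ∀ A : ℝ, HasDerivAt (fun θ : ℝ => Real.sin (A*θ)) (A*Real.cos (A*x)) x := by
      intro A
      have h := (Real.hasDerivAt_sin (A*x)).comp x ((hasDerivAt_id x).const_mul A)
      simpa [Function.comp_def, mul_comm] using h
    exact ((key ((n:ℝ)+1)).sub ((key (n:ℝ)).const_mul (2*c))).add
      ((key ((n:ℝ)-1)).const_mul (c^2))
  -- near 0
  have near0 : ∀ b : ℝ, 0 < b → ∃ y ∈ Set.Ioo (0:ℝ) b, 0 < f y := by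
    intro b hb
    have hD0 := hderiv 0
    simp only [mul_zero, Real.cos_zero, mul_one] at hD0
    have hpos : 0 < ((n:ℝ)+1) - 2*c*(n:ℝ) + c^2*((n:ℝ)-1) := by
      nlinarith [mul_nonneg hNpos.le (sq_nonneg (1-c))]
    exact exists_pos_right_of_deriv_pos hD0 hf0 hpos hb
  -- near π
  have nearpi : ∀ a : ℝ, a < π → ∃ y ∈ Set.Ioo a π, 0 < (-1:ℝ)^n * f y := by
    intro a ha
    have cpin : Real.cos ((n:ℝ)*π) = (-1:ℝ)^n := by
      simpa using Real.cos_nat_mul_pi_sub 0 n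
    have cpip : Real.cos (((n:ℝ)+1)*π) = -(-1:ℝ)^n := by
      have h : ((n:ℝ)+1)*π = (n:ℝ)*π + π := by ring
      rw [h, Real.cos_add_pi, cpin]
    have cpim : Real.cos (((n:ℝ)-1)*π) = -(-1:ℝ)^n := by
      have h : ((n:ℝ)-1)*π = (n:ℝ)*π - π := by ring
      rw [h, Real.cos_nat_mul_pi_sub, Real.cos_pi]; ring
    have hDpi := hderiv π
    rw [cpin, cpip, cpim] at hDpi
    have hg := hDpi.const_mul ((-1:ℝ)^n)
    have hEE : ((-1:ℝ)^n)*((-1:ℝ)^n) = 1 := by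
      rw [← pow_add]; exact Even.neg_one_pow ⟨n, rfl⟩
    have hDg : HasDerivAt (fun x => (-1:ℝ)^n * f x)
        (-(((n:ℝ)+1) + 2*c*(n:ℝ) + c^2*((n:ℝ)-1))) π := by
      exact hg.congr_deriv (by
        linear_combination (-(((n:ℝ)+1) + 2*c*(n:ℝ) + c^2*((n:ℝ)-1))) * hEE)
    have hgneg : (-(((n:ℝ)+1) + 2*c*(n:ℝ) + c^2*((n:ℝ)-1))) < 0 := by nlinarith
    have hg0 : (-1:ℝ)^n * f π = 0 := by rw [hfpi, mul_zero]
    exact exists_pos_left_of_deriv_neg hDg hg0 hgneg ha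
  -- endpoints
  set a := ((l:ℝ)-1)*π/(n:ℝ) with hadef
  set b := (l:ℝ)*π/(n:ℝ) with hbdef
  have hπ := Real.pi_pos
  have hl1' : (1:ℝ) ≤ (l:ℝ) := by exact_mod_cast hl1
  have hln' : (l:ℝ) ≤ (n:ℝ) := by exact_mod_cast hln
  have hab : a < b := by
    rw [hadef, hbdef, div_lt_div_iff₀ hNpos hNpos]; nlinarith
  have ha0 : 0 ≤ a := by
    rw [hadef]; apply div_nonneg _ hNpos.le
    apply mul_nonneg (by linarith) hπ.le
  have hbpi : b ≤ π := by
    rw [hbdef, div_le_iff₀ hNpos]; nlinarith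
  set s := (-1:ℝ)^l with hsdef
  have hss : s*s = 1 := by
    rw [hsdef, ← pow_add]; exact Even.neg_one_pow ⟨l, rfl⟩
  -- right endpoint
  have hbside : ∃ b', b' ∈ Set.Ioc a b ∧ 0 < s * f b' := by
    rcases lt_or_eq_of_le hln with hlt | heq
    · refine ⟨b, ⟨hab, le_refl b⟩, ?_⟩
      have hlt' : (l:ℝ) < (n:ℝ) := by exact_mod_cast hlt
      have hsin : 0 < Real.sin ((l:ℝ)*π/(n:ℝ)) := by
        apply Real.sin_pos_of_pos_of_lt_pi
        · apply div_pos (by nlinarith) hNpos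
        · rw [div_lt_iff₀ hNpos]; nlinarith
      rw [hbdef, hgrid l]
      have h2 : s * ((-1:ℝ)^l * (1 - c^2) * Real.sin ((l:ℝ)*π/(n:ℝ)))
          = (1-c^2) * Real.sin ((l:ℝ)*π/(n:ℝ)) := by
        rw [← hsdef]; linear_combination ((1-c^2)*Real.sin ((l:ℝ)*π/(n:ℝ))) * hss
      rw [h2]; exact mul_pos (by nlinarith) hsin
    · have hbpi' : b = π := by
        rw [hbdef, heq, mul_comm, mul_div_assoc, div_self hN0, mul_one]
      obtain ⟨y, hy, hypos⟩ := nearpi a (by rw [← hbpi']; exact hab)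
      refine ⟨y, ⟨hy.1, by rw [hbpi']; exact hy.2.le⟩, ?_⟩
      rw [hsdef, heq]; exact hypos
  obtain ⟨b', hb'ab, hb'pos⟩ := hbside
  -- left endpoint
  have haside : ∃ a', a' ∈ Set.Ico a b' ∧ s * f a' < 0 := by
    rcases Nat.lt_or_ge l 2 with hl2 | hl2
    · have hl : l = 1 := le_antisymm (by omega) hl1
      have ha0' : a = 0 := by rw [hadef, hl]; norm_num
      obtain ⟨y, hy, hypos⟩ := near0 b' (by rw [← ha0']; exact hb'ab.1)
      refine ⟨y, ⟨by rw [ha0']; exact hy.1.le, hy.2⟩, ?_⟩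
      rw [hsdef, hl, pow_one]; linarith
    · refine ⟨a, ⟨le_refl a, hb'ab.1⟩, ?_⟩
      have hcast : ((l-1 : ℕ):ℝ) = (l:ℝ) - 1 := by
        rw [Nat.cast_sub hl1]; norm_num
      have hfa : f a = (-1:ℝ)^(l-1) * (1-c^2) * Real.sin a := by
        rw [hadef, ← hcast]; exact hgrid (l-1)
      have hsina : 0 < Real.sin a := by
        apply Real.sin_pos_of_pos_of_lt_pi
        · rw [hadef]; apply div_pos _ hNpos
          have : (2:ℝ) ≤ (l:ℝ) := by exact_mod_cast hl2
          nlinarith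
        · exact lt_of_lt_of_le hab hbpi
      rw [hfa]
      have hpow : s * (-1:ℝ)^(l-1) = -1 := by
        rw [hsdef, ← pow_add]
        have h : l + (l-1) = 2*(l-1)+1 := by omega
        rw [h]; exact Odd.neg_one_pow ⟨l-1, by ring⟩
      have h3 : s * ((-1:ℝ)^(l-1) * (1-c^2) * Real.sin a)
          = -((1-c^2) * Real.sin a) := by
        linear_combination ((1-c^2)*Real.sin a) * hpow
      have h4 : 0 < (1-c^2)*Real.sin a := mul_pos (by nlinarith) hsina
      rw [h3]; linarith
  obtain ⟨a', ha'ab, ha'neg⟩ := haside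
  -- IVT
  have hconts : ContinuousOn (fun x => s * f x) (Set.Icc a' b') :=
    (continuous_const.mul hcont).continuousOn
  obtain ⟨θ, hθmem, hθeq⟩ :=
    intermediate_value_Ioo ha'ab.2.le hconts ⟨ha'neg, hb'pos⟩
  have hfθ : f θ = 0 := by
    have hs0 : s ≠ 0 := by rw [hsdef]; exact pow_ne_zero _ (by norm_num)
    rcases mul_eq_zero.mp hθeq with h | h
    · exact absurd h hs0
    · exact h
  have hθa : a < θ := lt_of_le_of_lt ha'ab.1 hθmem.1
  have hθb : θ < b := lt_of_lt_of_le hθmem.2 hb'ab.2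
  have hθpos : 0 < θ := lt_of_le_of_lt ha0 hθa
  have hθpi : θ < π := lt_of_lt_of_le hθb hbpi
  have hsinθ : 0 < Real.sin θ := Real.sin_pos_of_pos_of_lt_pi hθpos hθpi
  refine ⟨θ, ⟨hθa, hθb⟩, ?_⟩
  have h0 := Polynomial.Chebyshev.U_real_cos θ (n:ℤ)
  have h1 := Polynomial.Chebyshev.U_real_cos θ ((n:ℤ)-1)
  have h2 := Polynomial.Chebyshev.U_real_cos θ ((n:ℤ)-2)
  push_cast at h0 h1 h2
  simp only [hfdef] at hfθ
  have key : ((Chebyshev.U ℝ (n:ℤ)).eval (Real.cos θ)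
      - 2*c*(Chebyshev.U ℝ ((n:ℤ)-1)).eval (Real.cos θ)
      + c^2*(Chebyshev.U ℝ ((n:ℤ)-2)).eval (Real.cos θ)) * Real.sin θ = 0 := by
    ring_nf at h0 h1 h2 hfθ ⊢
    linear_combination h0 - 2*c*h1 + c^2*h2 + hfθ
  have := (mul_eq_zero.mp key).resolve_right (ne_of_gt hsinθ)
  linarith [this]
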